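/- On the 8-dimensional solvable Lie algebra 𝔤 with basis e_1,...,e_8 and nonzero brackets [e_8, e_2] = e_4, [e_8, e_3] = e_5, equipped with the complex structure given by (1,0)-coframe φ¹ = e¹ + ie⁸, φ² = e² + ie³, φ³ = e⁴ + ie⁵, φ⁴ = e⁶ + ie⁷ (so dφ¹ = dφ² = dφ⁴ = 0 and dφ³ = (i/2)φ¹∧φ² + (i/2)φ²∧φ̄¹), the triple ∂-Massey product ⟨[φ¹], [φ²], [φ²]⟩ is nontrivial: the class [-2i φ³∧φ²] is nonzero in H^{2,0}_∂ / ([φ¹]∪H^{1,0}_∂ + H^{1,0}_∂∪[φ²]). -/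

import Mathlib

open ExteriorAlgebra

noncomputable section MasseyAux

/-- The linear functional `v ↦ (v a, v b)`. -/
def masseyPick (a b : Fin 4) : (Fin 4 → ℂ) →ₗ[ℂ] (Fin 2 → ℂ) :=
  LinearMap.pi ![LinearMap.proj a, LinearMap.proj b]

/-- The alternating 2-form `(v, w) ↦ v a * w b - v b * w a`. -/
def masseyForm (a b : Fin 4) : (Fin 4 → ℂ) [⋀^Fin 2]→ₗ[ℂ] ℂ :=
  (Matrix.detRowAlternating).compLinearMap (masseyPick a b)

def masseyFam (a b : Fin 4) : ∀ i, (Fin 4 → ℂ) [⋀^Fin i]→ₗ[ℂ] ℂ :=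
  Function.update (fun i => (0 : (Fin 4 → ℂ) [⋀^Fin i]→ₗ[ℂ] ℂ)) 2 (masseyForm a b)

/-- The coefficient functional on the exterior algebra. -/
def masseyL (a b : Fin 4) : ExteriorAlgebra ℂ (Fin 4 → ℂ) →ₗ[ℂ] ℂ :=
  liftAlternating (masseyFam a b)

theorem masseyForm_apply (a b : Fin 4) (v : Fin 2 → (Fin 4 → ℂ)) :
    masseyForm a b v = v 0 a * v 1 b - v 0 b * v 1 a := by
  rw [masseyForm, AlternatingMap.compLinearMap_apply]
  show Matrix.det (Matrix.of fun i => (masseyPick a b) (v i)) = _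
  rw [Matrix.det_fin_two]
  simp [masseyPick]

theorem masseyL_ι_mul_ι (a b : Fin 4) (m n : Fin 4 → ℂ) :
    masseyL a b (ι ℂ m * ι ℂ n) = m a * n b - m b * n a := by
  rw [masseyL, liftAlternating_ι_mul, liftAlternating_ι]
  show (masseyFam a b 2).curryLeft m ![n] = _
  rw [masseyFam, Function.update_self]
  show masseyForm a b (Matrix.vecCons m ![n]) = _
  rw [masseyForm_apply]
  simp

theorem masseyL_eq_zero (a b : Fin 4) (q : ℕ) (hq : q ≠ 2)
    (x : ExteriorAlgebra ℂ (Fin 4 → ℂ))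
    (hx : x ∈ (LinearMap.range (ι ℂ (M := Fin 4 → ℂ))) ^ q) :
    masseyL a b x = 0 := by
  have hx' : x ∈ Submodule.span ℂ (Set.range (ιMulti ℂ q)) := by
    rw [ιMulti_span_fixedDegree]; exact hx
  clear hx
  induction hx' using Submodule.span_induction with
  | mem z hz =>
      obtain ⟨v, rfl⟩ := hz
      rw [masseyL, liftAlternating_apply_ιMulti, masseyFam, Function.update_of_ne hq]
      rfl
  | zero => simp
  | add _ _ _ _ h1 h2 => simp [h1, h2]
  | smul c _ _ h => simp [h]

end MasseyAux


set_option maxHeartbeats 1000000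


/-- **Example (8-dimensional solvmanifold with nontrivial Massey product).** Consider
the complex of `(•,0)`-forms on the 8-dimensional solvable Lie algebra `𝔤` with
brackets `[e₈,e₂] = e₄`, `[e₈,e₃] = e₅` and the complex structure with `(1,0)`-coframe
`φ¹ = e¹+ie⁸, φ² = e²+ie³, φ³ = e⁴+ie⁵, φ⁴ = e⁶+ie⁷`, so that
`∂φ¹ = ∂φ² = ∂φ⁴ = 0` and `∂φ³ = (i/2) φ¹∧φ²`. We model the invariant `(•,0)`-forms
as the exterior algebra on `ℂ⁴ = span(φ¹,...,φ⁴)` (here `φ i := ι (Pi.single i 1)`,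
with `φ 0, φ 1, φ 2, φ 3` standing for `φ¹, φ², φ³, φ⁴`), with `∂` the graded
derivation determined by its values on the generators. Then the triple `∂`-Massey
product `⟨[φ¹],[φ²],[φ²]⟩ = [-2i φ³∧φ²]` is nontrivial: `-2i φ³∧φ²` does not lie in
`im ∂ + [φ¹]∪H^{1,0}_∂ + H^{1,0}_∂∪[φ²]`. -/
theorem solvmanifold_nontrivial_massey_product
    (del : Module.End ℂ (ExteriorAlgebra ℂ (Fin 4 → ℂ)))
    (φ : Fin 4 → ExteriorAlgebra ℂ (Fin 4 → ℂ))
    (hφ : φ = fun i => ExteriorAlgebra.ι ℂ (Pi.single i (1 : ℂ)))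
    -- ∂ is a degree-1 graded derivation
    (hdeg : ∀ p : ℕ, ∀ x ∈ (LinearMap.range (ExteriorAlgebra.ι ℂ (M := Fin 4 → ℂ))) ^ p,
      del x ∈ (LinearMap.range (ExteriorAlgebra.ι ℂ (M := Fin 4 → ℂ))) ^ (p + 1))
    (hLeib : ∀ (p : ℕ) (x y : ExteriorAlgebra ℂ (Fin 4 → ℂ)),
      x ∈ (LinearMap.range (ExteriorAlgebra.ι ℂ (M := Fin 4 → ℂ))) ^ p →
      del (x * y) = del x * y + ((-1 : ℂ) ^ p) • (x * del y))
    (hd2 : del * del = 0)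
    -- structure equations: ∂φ¹ = ∂φ² = ∂φ⁴ = 0, ∂φ³ = (i/2) φ¹∧φ²
    (h1 : del (φ 0) = 0) (h2 : del (φ 1) = 0) (h4 : del (φ 3) = 0)
    (h3 : del (φ 2) = (Complex.I / 2) • (φ 0 * φ 1)) :
    ¬ ((-2 * Complex.I) • (φ 2 * φ 1) ∈
        LinearMap.range del ⊔
        Submodule.span ℂ {z : ExteriorAlgebra ℂ (Fin 4 → ℂ) | ∃ w,
          w ∈ (LinearMap.range (ExteriorAlgebra.ι ℂ (M := Fin 4 → ℂ))) ^ (1 : ℕ) ∧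
          del w = 0 ∧ z = φ 0 * w} ⊔
        Submodule.span ℂ {z : ExteriorAlgebra ℂ (Fin 4 → ℂ) | ∃ w,
          w ∈ (LinearMap.range (ExteriorAlgebra.ι ℂ (M := Fin 4 → ℂ))) ^ (1 : ℕ) ∧
          del w = 0 ∧ z = w * φ 1}) := by
  intro hmem
  -- value of `del` on degree-one elements
  have hdelι : ∀ m : Fin 4 → ℂ, del (ι ℂ m) = (m 2 * (Complex.I / 2)) • (φ 0 * φ 1) := by
    intro m
    have hm : ι ℂ m = m 0 • φ 0 + m 1 • φ 1 + m 2 • φ 2 + m 3 • φ 3 := by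
      rw [hφ]
      have hm' : m = m 0 • (Pi.single 0 1 : Fin 4 → ℂ) + m 1 • (Pi.single 1 1 : Fin 4 → ℂ) +
          m 2 • (Pi.single 2 1 : Fin 4 → ℂ) + m 3 • (Pi.single 3 1 : Fin 4 → ℂ) := by
        funext j; fin_cases j <;> simp [Pi.single_apply]
      conv_lhs => rw [hm']
      simp
    rw [hm]
    simp only [map_add, map_smul, h1, h2, h3, h4, smul_zero, zero_add, add_zero, smul_smul]
  -- the functional detecting φ³∧φ²
  have hL01 : masseyL 0 1 (φ 0 * φ 1) = 1 := by
    rw [hφ]; rw [masseyL_ι_mul_ι]; simp [Pi.single_apply]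
  have hL21φ01 : masseyL 2 1 (φ 0 * φ 1) = 0 := by
    rw [hφ]; rw [masseyL_ι_mul_ι]; simp [Pi.single_apply]
  have hLdel : ∀ x, masseyL 2 1 (del x) = 0 := by
    intro x
    induction x using DirectSum.Decomposition.inductionOn
      (fun i : ℕ => ⋀[ℂ]^i (Fin 4 → ℂ)) with
    | zero => simp
    | add a b ha hb => rw [map_add, map_add, ha, hb, add_zero]
    | homogeneous m =>
      rename_i i
      by_cases hi : i = 1
      · subst hi
        obtain ⟨v, hv⟩ : ∃ v, ι ℂ v = (m : ExteriorAlgebra ℂ (Fin 4 → ℂ)) := by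
          have hmm : (↑m : ExteriorAlgebra ℂ (Fin 4 → ℂ)) ∈
              LinearMap.range (ι ℂ (M := Fin 4 → ℂ)) ^ (1 : ℕ) := m.2
          rw [pow_one] at hmm; exact hmm
        rw [← hv, hdelι v, map_smul, hL21φ01, smul_zero]
      · exact masseyL_eq_zero 2 1 (i + 1) (by omega) _ (hdeg i _ m.2)
  -- the big submodule is contained in the kernel of `masseyL 2 1`
  have hker : LinearMap.range del ⊔
      Submodule.span ℂ {z : ExteriorAlgebra ℂ (Fin 4 → ℂ) | ∃ w,
        w ∈ (LinearMap.range (ExteriorAlgebra.ι ℂ (M := Fin 4 → ℂ))) ^ (1 : ℕ) ∧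
        del w = 0 ∧ z = φ 0 * w} ⊔
      Submodule.span ℂ {z : ExteriorAlgebra ℂ (Fin 4 → ℂ) | ∃ w,
        w ∈ (LinearMap.range (ExteriorAlgebra.ι ℂ (M := Fin 4 → ℂ))) ^ (1 : ℕ) ∧
        del w = 0 ∧ z = w * φ 1} ≤ LinearMap.ker (masseyL 2 1) := by
    refine sup_le (sup_le ?_ ?_) ?_
    · rintro _ ⟨y, rfl⟩
      exact hLdel y
    · rw [Submodule.span_le]
      rintro _ ⟨w, hw, -, rfl⟩
      obtain ⟨v, rfl⟩ : ∃ v, ι ℂ v = w := by rw [pow_one] at hw; exact hw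
      have : masseyL 2 1 (φ 0 * ι ℂ v) = 0 := by
        rw [hφ]; rw [masseyL_ι_mul_ι]; simp [Pi.single_apply]
      exact this
    · rw [Submodule.span_le]
      rintro _ ⟨w, hw, hdw, rfl⟩
      obtain ⟨v, rfl⟩ : ∃ v, ι ℂ v = w := by rw [pow_one] at hw; exact hw
      have hv2 : v 2 = 0 := by
        have h0 : masseyL 0 1 (del (ι ℂ v)) = 0 := by rw [hdw, map_zero]
        rw [hdelι v, map_smul, hL01, smul_eq_mul, mul_one] at h0
        have : Complex.I / 2 ≠ 0 := by
          simp [div_ne_zero_iff, Complex.I_ne_zero]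
        exact (mul_eq_zero.mp h0).resolve_right this
      have : masseyL 2 1 (ι ℂ v * φ 1) = 0 := by
        rw [hφ]; rw [masseyL_ι_mul_ι]; simp [Pi.single_apply, hv2]
      exact this
  have hzero : masseyL 2 1 ((-2 * Complex.I) • (φ 2 * φ 1)) = 0 := hker hmem
  have hval : masseyL 2 1 ((-2 * Complex.I) • (φ 2 * φ 1)) = -2 * Complex.I := by
    rw [map_smul, hφ]; rw [masseyL_ι_mul_ι]; simp [Pi.single_apply]
  rw [hval] at hzero
  simp [Complex.I_ne_zero] at hzero
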